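/- Abelian property: fix an array of instructions τ, a configuration η, and a set V ⊂ ℤ^d. If α and β are both τ-legal toppling sequences for η that are contained in V and stabilize η in V (i.e. the resulting configuration has no active particles in V), then m_α = m_β = m^τ_{V,η}, and the resulting configurations are equal: Φ^τ_α(η, 0) = Φ^τ_β(η, 0). -/

import Mathlib

open MeasureTheory

noncomputable section

/-! ## Site-wise (Diaconis–Fulton) representation of Activated Random Walk -/

/-- An instruction: either a sleep instruction or a jump instruction to a site. -/
inductive Instr (Λ : Type*) where
  | sleep : Instr Λ
  | jump : Λ → Instr Λ

instance {Λ : Type*} : MeasurableSpace (Instr Λ) := ⊤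

/-- The state of a site: either one sleeping particle (`𝔰`), or `k` active particles. -/
inductive SiteState where
  | sleeping : SiteState
  | act : ℕ → SiteState

/-- Total number of particles on a site. -/
def SiteState.particles : SiteState → ℕ
  | sleeping => 1
  | act k => k

/-- Number of active particles on a site. -/
def SiteState.activeCount : SiteState → ℕ
  | sleeping => 0
  | act k => k

/-- Remove one particle from a site (waking the site first if it was sleeping). -/
def SiteState.remove : SiteState → SiteState
  | sleeping => act 0
  | act k => act (k - 1)

/-- Add one active particle to a site, waking any sleeping particle there. -/
def SiteState.add (s : SiteState) : SiteState := act (s.particles + 1)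

/-- A configuration `η : Λ → ℕ ∪ {𝔰}` of the activated random walk. -/
abbrev Config (Λ : Type*) := Λ → SiteState

variable {Λ : Type*} [DecidableEq Λ]

/-- The effect of the instruction `ι` applied at the site `x`: a sleep instruction puts the
particle at `x` to sleep if it is alone (otherwise nothing happens); a jump instruction to `y`
moves one particle from `x` to `y`, waking any sleeping particle at `y`.  (For an acceptable
but not legal toppling, the sleeping particle at `x` is first woken up.) -/
def applyInstr (ι : Instr Λ) (x : Λ) (η : Config Λ) : Config Λ :=
  match ι with
  | .sleep => Function.update η x (if (η x).particles = 1 then .sleeping else η x)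
  | .jump y =>
      let η₁ := Function.update η x (η x).remove
      Function.update η₁ y (η₁ y).add

/-- A state of the site-wise representation: a configuration together with the odometer
counting the number of instructions already used at each site. -/
abbrev SWState (Λ : Type*) := Config Λ × (Λ → ℕ)

/-- Toppling the site `x`: apply the next unused instruction at `x` (instructions being
numbered from `0`) and increment the odometer at `x`.  This is the operator `Φ^τ_x`. -/
def topple (τ : Λ → ℕ → Instr Λ) (x : Λ) (s : SWState Λ) : SWState Λ :=
  (applyInstr (τ x (s.2 x)) x s.1, Function.update s.2 x (s.2 x + 1))

/-- `Φ^τ_α` for a toppling sequence `α`. -/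
def toppleSeq (τ : Λ → ℕ → Instr Λ) (α : List Λ) (s : SWState Λ) : SWState Λ :=
  α.foldl (fun s x => topple τ x s) s

/-- A toppling at `x` is legal if `x` holds at least one active particle. -/
def IsLegal (s : SWState Λ) (x : Λ) : Prop := 0 < (s.1 x).activeCount

/-- A toppling at `x` is acceptable if `x` holds at least one particle. -/
def IsAcceptable (s : SWState Λ) (x : Λ) : Prop := 0 < (s.1 x).particles

/-- A `τ`-legal sequence of topplings starting from the state `s`. -/
def LegalSeq (τ : Λ → ℕ → Instr Λ) : List Λ → SWState Λ → Prop
  | [], _ => True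
  | x :: rest, s => IsLegal s x ∧ LegalSeq τ rest (topple τ x s)

/-- A `τ`-acceptable sequence of topplings starting from the state `s`. -/
def AcceptableSeq (τ : Λ → ℕ → Instr Λ) : List Λ → SWState Λ → Prop
  | [], _ => True
  | x :: rest, s => IsAcceptable s x ∧ AcceptableSeq τ rest (topple τ x s)

/-- The initial state associated with a configuration: zero odometer. -/
def init (η : Config Λ) : SWState Λ := (η, fun _ => 0)

/-- `α` stabilizes `η` in `V`: after applying `α`, no site of `V` holds an active particle. -/
def StabilizesIn (τ : Λ → ℕ → Instr Λ) (α : List Λ) (η : Config Λ) (V : Set Λ) : Prop :=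
  ∀ x ∈ V, ((toppleSeq τ α (init η)).1 x).activeCount = 0

/-- The odometer `m_α` of a toppling sequence `α`: the number of occurrences of each site. -/
def seqOdometer (α : List Λ) (x : Λ) : ℕ := α.count x

/-- `m^τ_{V,η}`: the supremum of `m_α` over `τ`-legal toppling sequences `α` contained in `V`,
started from `η` with zero odometer. -/
def mV (τ : Λ → ℕ → Instr Λ) (V : Set Λ) (η : Config Λ) (x : Λ) : ℕ∞ :=
  ⨆ α : {α : List Λ // (∀ y ∈ α, y ∈ V) ∧ LegalSeq τ α (init η)}, (seqOdometer α.1 x : ℕ∞)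

/-- The total stabilization odometer `m^τ_η`. -/
def mTot (τ : Λ → ℕ → Instr Λ) (η : Config Λ) (x : Λ) : ℕ∞ :=
  ⨆ α : {α : List Λ // LegalSeq τ α (init η)}, (seqOdometer α.1 x : ℕ∞)

end

section
variable {Λ : Type*} [DecidableEq Λ] {τ : Λ → ℕ → Instr Λ}

lemma isLegal_act {s : SWState Λ} {x : Λ} (h : IsLegal s x) :
    ∃ k, 0 < k ∧ s.1 x = .act k := by
  unfold IsLegal at h
  cases hc : s.1 x with
  | sleeping => rw [hc] at h; simp [SiteState.activeCount] at h
  | act k => rw [hc] at h; exact ⟨k, h, rfl⟩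

set_option maxHeartbeats 1000000 in
lemma applyInstr_comm {c : Config Λ} {x y : Λ} (hxy : x ≠ y) (ι κ : Instr Λ)
    {k m : ℕ} (hk : 0 < k) (hm : 0 < m) (hx : c x = .act k) (hy : c y = .act m) :
    applyInstr ι x (applyInstr κ y c) = applyInstr κ y (applyInstr ι x c) := by
  cases ι <;> cases κ <;>
  · funext u
    simp only [applyInstr, Function.update_apply]
    split_ifs <;> subst_vars <;>
      simp_all only [SiteState.remove, SiteState.add, SiteState.particles, SiteState.act.injEq,
        ne_eq, not_true, not_false_iff] <;>
      omega

/-- Toppling a different site preserves legality. -/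
lemma isLegal_topple_of_ne {s : SWState Λ} {x y : Λ} (hxy : x ≠ y) (h : IsLegal s x) :
    IsLegal (topple τ y s) x := by
  obtain ⟨k, hk, hc⟩ := isLegal_act h
  unfold IsLegal topple
  cases hι : τ y (s.2 y) with
  | sleep =>
      simp only [applyInstr, Function.update_apply, if_neg hxy, hc, SiteState.activeCount]
      exact hk
  | jump z =>
      simp only [applyInstr, Function.update_apply]
      by_cases hz : x = z
      · subst hz
        simp only [if_pos rfl, SiteState.add, SiteState.activeCount]
        exact Nat.succ_pos _
      · simp only [if_neg hz, if_neg hxy, hc, SiteState.activeCount]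
        exact hk

lemma topple_comm {s : SWState Λ} {x y : Λ} (hxy : x ≠ y)
    (hx : IsLegal s x) (hy : IsLegal s y) :
    topple τ x (topple τ y s) = topple τ y (topple τ x s) := by
  obtain ⟨k, hk, hcx⟩ := isLegal_act hx
  obtain ⟨m, hm, hcy⟩ := isLegal_act hy
  unfold topple
  simp only [Function.update_apply, if_neg hxy, if_neg (Ne.symm hxy), Function.update_of_ne hxy,
    Function.update_of_ne (Ne.symm hxy)]
  refine Prod.ext (applyInstr_comm hxy _ _ hk hm hcx hcy) ?_
  show Function.update (Function.update s.2 y (s.2 y + 1)) x (s.2 x + 1)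
      = Function.update (Function.update s.2 x (s.2 x + 1)) y (s.2 y + 1)
  exact (Function.update_comm hxy _ _ _).symm

lemma toppleSeq_cons (x : Λ) (l : List Λ) (s : SWState Λ) :
    toppleSeq τ (x :: l) s = toppleSeq τ l (topple τ x s) := rfl

lemma isLegal_toppleSeq_of_not_mem {s : SWState Λ} {β : List Λ} {x : Λ}
    (hx : IsLegal s x) (hβ : LegalSeq τ β s) (hmem : x ∉ β) :
    IsLegal (toppleSeq τ β s) x := by
  induction β generalizing s with
  | nil => exact hx
  | cons y γ ih =>
      obtain ⟨hy, hγ⟩ := hβ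
      have hne : x ≠ y := fun h => hmem (h ▸ List.mem_cons_self (a := y) (l := γ))
      exact ih (isLegal_topple_of_ne hne hx) hγ (fun h => hmem (List.mem_cons_of_mem _ h))

/-- Rearrangement: a legal site can be moved to the front. -/
lemma rearrange {s : SWState Λ} {β : List Λ} {x : Λ} (hx : IsLegal s x)
    (hβ : LegalSeq τ β s) (hmem : x ∈ β) :
    LegalSeq τ (x :: β.erase x) s ∧
      toppleSeq τ (x :: β.erase x) s = toppleSeq τ β s := by
  induction β generalizing s with
  | nil => cases hmem
  | cons y γ ih =>
      obtain ⟨hy, hγ⟩ := hβ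
      by_cases h : y = x
      · subst h
        rw [List.erase_cons_head]
        exact ⟨⟨hy, hγ⟩, rfl⟩
      · have hne : x ≠ y := Ne.symm h
        have hmem' : x ∈ γ := by
          rcases List.mem_cons.mp hmem with h' | h'
          · exact absurd h'.symm h
          · exact h'
        have hx' : IsLegal (topple τ y s) x := isLegal_topple_of_ne hne hx
        obtain ⟨h1, h2⟩ := ih hx' hγ hmem'
        obtain ⟨_, h1'⟩ := h1
        have comm : topple τ x (topple τ y s) = topple τ y (topple τ x s) :=
          topple_comm hne hx hy
        rw [List.erase_cons_tail (by simpa using h)]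
        refine ⟨⟨hx, isLegal_topple_of_ne h hy, ?_⟩, ?_⟩
        · rw [← comm]; exact h1'
        · show toppleSeq τ (γ.erase x) (topple τ y (topple τ x s)) = _
          rw [← comm]
          exact h2

/-- Two legal sequences with equal counts produce the same state. -/
lemma toppleSeq_eq_of_count {s : SWState Λ} {α β : List Λ}
    (hα : LegalSeq τ α s) (hβ : LegalSeq τ β s)
    (hcount : ∀ x, α.count x = β.count x) :
    toppleSeq τ α s = toppleSeq τ β s := by
  induction α generalizing β s with
  | nil =>
      have : β = [] := by
        rcases β with _ | ⟨y, γ⟩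
        · rfl
        · have := hcount y
          simp [List.count_cons_self] at this
      subst this; rfl
  | cons x α' ih =>
      obtain ⟨hx, hα'⟩ := hα
      have hmem : x ∈ β := by
        have := hcount x
        simp [List.count_cons_self] at this
        exact List.count_pos_iff.mp (by omega)
      obtain ⟨⟨_, hβ₂⟩, heq⟩ := rearrange hx hβ hmem
      rw [← heq, toppleSeq_cons, toppleSeq_cons]
      refine ih hα' hβ₂ fun y => ?_
      have h1 := hcount y
      rw [List.count_cons] at h1
      simp only [beq_iff_eq] at h1
      by_cases hyx : y = x
      · subst hyx
        rw [List.count_erase_self]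
        rw [if_pos rfl] at h1
        omega
      · rw [List.count_erase_of_ne hyx]
        rw [if_neg (fun hh => hyx hh.symm)] at h1
        omega

/-- Monotonicity: a legal sequence in `V` is dominated by any stabilizing legal sequence. -/
lemma count_le_of_stab {s : SWState Λ} {V : Set Λ} {α β : List Λ}
    (hαV : ∀ x ∈ α, x ∈ V) (hα : LegalSeq τ α s) (hβ : LegalSeq τ β s)
    (hstab : ∀ x ∈ V, ((toppleSeq τ β s).1 x).activeCount = 0) :
    ∀ x, α.count x ≤ β.count x := by
  induction α generalizing s β with
  | nil => intro x; simp
  | cons x α' ih =>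
      obtain ⟨hx, hα'⟩ := hα
      have hmem : x ∈ β := by
        by_contra hmemn
        have := isLegal_toppleSeq_of_not_mem hx hβ hmemn
        have h0 := hstab x (hαV x List.mem_cons_self)
        unfold IsLegal at this
        omega
      obtain ⟨⟨_, hβ₂⟩, heq⟩ := rearrange hx hβ hmem
      have hstab' : ∀ z ∈ V, ((toppleSeq τ (β.erase x) (topple τ x s)).1 z).activeCount = 0 := by
        intro z hz
        have := hstab z hz
        rw [← heq] at this
        exact this
      have hle := ih (fun z hz => hαV z (List.mem_cons_of_mem _ hz)) hα' hβ₂ hstab'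
      intro y
      have h2 := hle y
      by_cases hyx : y = x
      · subst hyx
        rw [List.count_erase_self] at h2
        have hc : 0 < β.count y := List.count_pos_iff.mpr hmem
        rw [List.count_cons_self]
        omega
      · rw [List.count_erase_of_ne hyx] at h2
        rw [List.count_cons_of_ne (Ne.symm hyx)]
        exact h2

end


noncomputable section

/-- The lattice `ℤ^d`. -/
abbrev Zd (d : ℕ) := Fin d → ℤ

/-- **Abelian property** (Lemma 2 in Rolla–Sidoravicius).  If `α` and `β` are both `τ`-legal
toppling sequences for `η` that are contained in `V` and stabilize `η` in `V`, then
`m_α = m_β = m^τ_{V,η}` and the resulting configurations (and odometers) are equal: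
`Φ^τ_α(η, 0) = Φ^τ_β(η, 0)`. -/
theorem statement13 {d : ℕ} (τ : Zd d → ℕ → Instr (Zd d)) (η : Config (Zd d))
    (V : Set (Zd d)) (α β : List (Zd d))
    (hαV : ∀ x ∈ α, x ∈ V) (hβV : ∀ x ∈ β, x ∈ V)
    (hα : LegalSeq τ α (init η)) (hβ : LegalSeq τ β (init η))
    (hαstab : StabilizesIn τ α η V) (hβstab : StabilizesIn τ β η V) :
    (∀ x, seqOdometer α x = seqOdometer β x) ∧
    (∀ x, (seqOdometer α x : ℕ∞) = mV τ V η x) ∧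
    toppleSeq τ α (init η) = toppleSeq τ β (init η) := by
  have c1 := count_le_of_stab hαV hα hβ hβstab
  have c2 := count_le_of_stab hβV hβ hα hαstab
  have hco : ∀ x, seqOdometer α x = seqOdometer β x :=
    fun x => le_antisymm (c1 x) (c2 x)
  refine ⟨hco, ?_, toppleSeq_eq_of_count hα hβ hco⟩
  intro x
  apply le_antisymm
  · exact le_iSup (fun γ : {γ : List (Zd d) // (∀ y ∈ γ, y ∈ V) ∧ LegalSeq τ γ (init η)} =>
      (seqOdometer γ.1 x : ℕ∞)) ⟨α, hαV, hα⟩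
  · refine iSup_le fun γ => ?_
    exact_mod_cast count_le_of_stab γ.2.1 γ.2.2 hα hαstab x

end
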